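/- Let p_1, p_2, … be i.i.d. random vectors uniformly distributed on the square [0,1]², and let Y_n denote the number of chain records of p_1,…,p_n. Then for every n ≥ 1, E[Y_n] = (H_n + 1)/2 and Var[Y_n] = (H_n + H_n^{(2)} − 2)/4. -/

import Mathlib

open MeasureTheory ProbabilityTheory Filter Asymptotics Real Set

noncomputable section

attribute [local instance] Classical.propDecidable

/-- `prec q p` means `q ≺ p`, i.e. `p` strictly dominates `q` in every coordinate. -/
def prec {d : ℕ} (q p : Fin d → ℝ) : Prop := ∀ i, q i < p i

/-- The `d`-dimensional simplex. -/
def simplex (d : ℕ) : Set (Fin d → ℝ) := {x | (∀ i, 0 ≤ x i) ∧ (∑ i, x i) ≤ 1}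

/-- The hypercube `[0,1]^d`. -/
def cube (d : ℕ) : Set (Fin d → ℝ) := Set.univ.pi fun _ => Set.Icc 0 1

/-- The uniform probability measure on a set `S ⊆ ℝ^d`. -/
def unif {d : ℕ} (S : Set (Fin d → ℝ)) : Measure (Fin d → ℝ) :=
  (volume S)⁻¹ • volume.restrict S

/-- The number of Pareto records among `q 0, …, q (n-1)`. -/
def paretoCount {d : ℕ} (q : ℕ → Fin d → ℝ) (n : ℕ) : ℕ :=
  ((Finset.range n).filter fun k => ∀ i < k, ¬ prec (q k) (q i)).card

/-- The number of maxima among `q 0, …, q (n-1)`. -/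
def maxCount {d : ℕ} (q : ℕ → Fin d → ℝ) (n : ℕ) : ℕ :=
  ((Finset.range n).filter fun k => ∀ i < n, i ≠ k → ¬ prec (q k) (q i)).card

/-- The index of the most recent chain record among `q 0, …, q k`. -/
def chainLead {d : ℕ} (q : ℕ → Fin d → ℝ) : ℕ → ℕ
  | 0 => 0
  | k + 1 => if prec (q (chainLead q k)) (q (k + 1)) then k + 1 else chainLead q k

/-- The number of chain records among `q 0, …, q (n-1)`:
`q 0` is a chain record, and `q k` is a chain record iff it dominates the most recent
chain record among `q 0, …, q (k-1)`. -/
def chainCount {d : ℕ} (q : ℕ → Fin d → ℝ) (n : ℕ) : ℕ :=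
  ((Finset.range n).filter fun k => chainLead q k = k).card

/-- The number of dominating records among `q 0, …, q (n-1)`. -/
def domCount {d : ℕ} (q : ℕ → Fin d → ℝ) (n : ℕ) : ℕ :=
  ((Finset.range n).filter fun k => ∀ i < k, prec (q i) (q k)).card

/-- The harmonic-type sum `H_n^{(a)} = ∑_{j=1}^n j^{-a}`. -/
def genH (a n : ℕ) : ℝ := ∑ j ∈ Finset.range n, (1 : ℝ) / (j + 1 : ℝ) ^ a

/-- The standard normal distribution function `Φ`. -/
def stdNormalCDF (x : ℝ) : ℝ := (gaussianReal 0 1 (Set.Iio x)).toReal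

namespace ChainAux


abbrev E := Fin 2 → ℝ



/-- harmonic number -/
def HH (n : ℕ) : ℝ := ∑ j ∈ Finset.range n, (1:ℝ)/(j+1)

def cc (r : ℕ) : ℝ := 1 / ((r:ℝ)+1)^2

def MM (r n : ℕ) : ℝ := 1 / (((r:ℝ)+1) * ((n+r).choose r : ℝ))

def VV (r n : ℕ) : ℝ := MM r n * (1 + (HH (n+r) - HH (r+1))/2)

lemma HH_succ (n : ℕ) : HH (n+1) = HH n + 1/((n:ℝ)+1) := by
  simp [HH, Finset.sum_range_succ]

lemma choose_pos_real (n r : ℕ) : (0:ℝ) < ((n+r).choose r : ℝ) := by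
  exact_mod_cast Nat.choose_pos (by omega)

lemma key1 (n r : ℕ) : (((n+r+1).choose (r+1) : ℕ) : ℝ)
    = ((n:ℝ)+r+1) * ((n+r).choose r : ℝ) / ((r:ℝ)+1) := by
  have h := Nat.add_one_mul_choose_eq (n+r) r
  have h' : ((n+r+1) * (n+r).choose r : ℕ) = ((n+r+1).choose (r+1) * (r+1) : ℕ) := by
    simpa [Nat.succ_eq_add_one] using h
  have := congrArg (fun m : ℕ => (m:ℝ)) h'
  push_cast at this
  field_simp
  linarith [this]

lemma key2 (n r : ℕ) : (((n+1+r).choose r : ℕ) : ℝ)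
    = ((n:ℝ)+r+1) * ((n+r).choose r : ℝ) / ((n:ℝ)+1) := by
  have h := Nat.add_one_mul_choose_eq (n+r) n
  have e1 : (n+r).choose n = (n+r).choose r := by
    rw [← Nat.choose_symm (by omega : n ≤ n + r)]
    congr 1
    omega
  have e2 : (n+r+1).choose (n+1) = (n+r+1).choose r := by
    rw [← Nat.choose_symm (by omega : n+1 ≤ n + r + 1)]
    congr 1
    omega
  have h' : ((n+r+1) * (n+r).choose r : ℕ) = ((n+r+1).choose r * (n+1) : ℕ) := by
    rw [← e1, ← e2]
    simpa [Nat.succ_eq_add_one] using h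
  have := congrArg (fun m : ℕ => (m:ℝ)) h'
  push_cast at this
  have e3 : n+1+r = n+r+1 := by omega
  rw [e3]
  rw [eq_div_iff (by positivity : ((n:ℝ)+1) ≠ 0)]
  linarith [this]

lemma MM_rec (r n : ℕ) : MM r (n+1) = MM r n - (1 - cc r) * MM (r+1) n := by
  have b0 := choose_pos_real n r
  unfold MM cc
  rw [key2 n r]
  have e : (n + (r+1)).choose (r+1) = (n+r+1).choose (r+1) := by congr 1
  rw [e, key1 n r]
  have h1 : ((r:ℝ)+1) ≠ 0 := by positivity
  have h2 : ((r:ℝ)+1+1) ≠ 0 := by positivity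
  have h3 : ((n:ℝ)+1) ≠ 0 := by positivity
  have h4 : ((n:ℝ)+r+1) ≠ 0 := by positivity
  have h5 : ((n+r).choose r : ℝ) ≠ 0 := ne_of_gt b0
  push_cast
  field_simp
  ring

lemma MM_one (r : ℕ) : MM r 1 = cc r := by
  unfold MM cc
  have : (1+r).choose r = r+1 := by
    rw [← Nat.choose_symm (by omega : r ≤ 1 + r)]
    simp [Nat.add_sub_cancel_right]
    omega
  rw [this]
  push_cast
  ring

lemma VV_one (r : ℕ) : VV r 1 = cc r := by
  unfold VV
  have : 1 + r = r + 1 := by omega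
  rw [this, sub_self]
  simpa using MM_one r

lemma VV_rec (r n : ℕ) : VV r (n+1) = VV r n - (1 - cc r) * VV (r+1) n + cc r * MM (r+1) n := by
  have b0 := choose_pos_real n r
  unfold VV MM cc
  have e1 : n + 1 + r = n + r + 1 := by omega
  have e2 : n + (r+1) = n + r + 1 := by omega
  have e3 : r + 1 + 1 = r + 2 := by omega
  rw [e1, e2, e3]
  rw [key1 n r]
  have e4 : ((n+r+1).choose r : ℝ) = ((n:ℝ)+r+1) * ((n+r).choose r : ℝ) / ((n:ℝ)+1) := by
    rw [← key2 n r]; congr 2; omega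
  rw [e4]
  have hH1 : HH (n+r+1) = HH (n+r) + 1/((n:ℝ)+r+1) := by
    rw [HH_succ (n+r)]; push_cast; ring_nf
  have hH2 : HH (r+2) = HH (r+1) + 1/((r:ℝ)+2) := by
    rw [show r+2 = (r+1)+1 from rfl, HH_succ (r+1)]; push_cast; ring_nf
  rw [hH1, hH2]
  have h1 : ((r:ℝ)+1) ≠ 0 := by positivity
  have h2 : ((r:ℝ)+2) ≠ 0 := by positivity
  have h3 : ((n:ℝ)+1) ≠ 0 := by positivity
  have h4 : ((n:ℝ)+r+1) ≠ 0 := by positivity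
  have h5 : ((n+r).choose r : ℝ) ≠ 0 := ne_of_gt b0
  push_cast
  field_simp
  ring


def genH' (a n : ℕ) : ℝ := ∑ j ∈ Finset.range n, (1 : ℝ) / (j + 1 : ℝ) ^ a

lemma HH_eq : HH = genH' 1 := by
  funext n; simp [HH, genH']

lemma genH'_succ (a n : ℕ) : genH' a (n+1) = genH' a n + 1/((n:ℝ)+1)^a := by
  simp [genH', Finset.sum_range_succ]

lemma genH'_one : genH' 1 1 = 1 := by simp [genH']
lemma genH'_two_one : genH' 2 1 = 1 := by norm_num [genH']
lemma HH_two : HH 2 = 3/2 := by norm_num [HH, Finset.sum_range_succ]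

lemma MM1 (n : ℕ) : MM 1 n = 1/(2*((n:ℝ)+1)) := by
  unfold MM
  rw [Nat.choose_one_right]
  push_cast
  ring

def y1 (n : ℕ) : ℝ := (genH' 1 n + 1)/2
def y2 (n : ℕ) : ℝ := (genH' 1 n + genH' 2 n - 2)/4 + ((genH' 1 n + 1)/2)^2

lemma y1_one : y1 1 = 1 := by simp [y1, genH'_one]
lemma y2_one : y2 1 = 1 := by norm_num [y2, genH'_one, genH'_two_one]

lemma y1_rec (n : ℕ) : y1 (n+1) = y1 n + MM 1 n := by
  unfold y1
  rw [genH'_succ, MM1]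
  have h3 : ((n:ℝ)+1) ≠ 0 := by positivity
  field_simp
  ring

lemma y2_rec (n : ℕ) : y2 (n+1) = y2 n + 2 * VV 1 n + MM 1 n := by
  unfold y2 VV
  rw [← HH_eq, MM1, HH_two]
  have h1 : HH (n+1) = HH n + 1/((n:ℝ)+1) := HH_succ n
  rw [show n + 1 = n+1 from rfl, h1]
  rw [HH_eq]
  rw [genH'_succ 2 n]
  have h3 : ((n:ℝ)+1) ≠ 0 := by positivity
  field_simp
  ring


lemma chainLead_le (q : ℕ → E) : ∀ k, chainLead q k ≤ k := by
  intro k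
  induction k with
  | zero => simp [chainLead]
  | succ k ih =>
    rw [chainLead]
    split
    · exact le_refl _
    · omega

lemma chainLead_congr {q q' : ℕ → E} : ∀ {k}, (∀ i ≤ k, q i = q' i) →
    chainLead q k = chainLead q' k := by
  intro k
  induction k with
  | zero => intro _; simp [chainLead]
  | succ k ih =>
    intro h
    have hk : chainLead q k = chainLead q' k := ih (fun i hi => h i (by omega))
    rw [chainLead, chainLead, hk, h (chainLead q' k) (by have := chainLead_le q' k; omega),
      h (k+1) le_rfl]

lemma chainCount_one (q : ℕ → E) : chainCount q 1 = 1 := by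
  simp [chainCount, Finset.range_one, Finset.filter_singleton, chainLead]

lemma chainCount_succ (q : ℕ → E) (n : ℕ) :
    chainCount q (n+1) = chainCount q n + (if chainLead q n = n then 1 else 0) := by
  unfold chainCount
  rw [Finset.range_add_one, Finset.filter_insert]
  split
  · rw [Finset.card_insert_of_notMem (by simp)]
  · simp

lemma chainLead_succ_iff (q : ℕ → E) (n : ℕ) :
    chainLead q (n+1) = n+1 ↔ prec (q (chainLead q n)) (q (n+1)) := by
  have hle := chainLead_le q n
  rw [chainLead]
  by_cases h : prec (q (chainLead q n)) (q (n+1))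
  · rw [if_pos h]
    simp [h]
  · rw [if_neg h]
    simp only [h, iff_false]
    omega

/-! Functions of finite histories -/

def Qn {n : ℕ} (x : Fin n → E) : ℕ → E := fun i => if h : i < n then x ⟨i, h⟩ else 0

def cLF (n : ℕ) (x : Fin n → E) (k : ℕ) : ℕ := chainLead (Qn x) k

def YH (n : ℕ) (x : Fin n → E) : ℕ := chainCount (Qn x) n

def LH (n : ℕ) (x : Fin n → E) : E := Qn x (cLF n x (n-1))

def clamp (t : ℝ) : ℝ := min 1 (max 0 t)

def av (z : E) : ℝ := ∏ i, clamp (1 - z i)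

lemma clamp_nonneg (t : ℝ) : 0 ≤ clamp t := le_min (by norm_num) (le_max_left _ _) |>.trans_eq rfl

lemma clamp_mem (t : ℝ) : clamp t ∈ Set.Icc (0:ℝ) 1 :=
  ⟨le_min zero_le_one (le_max_left 0 t) |>.trans (le_refl _), min_le_left _ _⟩

lemma av_mem (z : E) : av z ∈ Set.Icc (0:ℝ) 1 := by
  constructor
  · exact Finset.prod_nonneg fun i _ => (clamp_mem _).1
  · exact Finset.prod_le_one (fun i _ => (clamp_mem _).1) (fun i _ => (clamp_mem _).2)

lemma clamp_of_mem {t : ℝ} (h : t ∈ Set.Icc (0:ℝ) 1) : clamp t = t := by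
  rw [clamp, max_eq_right h.1, min_eq_right h.2]

lemma av_of_cube {z : E} (hz : z ∈ cube 2) : av z = ∏ i, (1 - z i) := by
  apply Finset.prod_congr rfl
  intro i _
  have := hz i (Set.mem_univ i)
  exact clamp_of_mem ⟨by simp [this.2], by simp [this.1]⟩

/-! Bridges between `q` and finite histories -/

lemma cLF_bridge (q : ℕ → E) (n k : ℕ) (hk : k < n) :
    cLF n (fun i : Fin n => q i) k = chainLead q k := by
  apply chainLead_congr
  intro i hi
  simp only [Qn]
  rw [dif_pos (by omega : i < n)]

lemma YH_bridge (q : ℕ → E) (n : ℕ) : YH n (fun i : Fin n => q i) = chainCount q n := by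
  unfold YH chainCount
  congr 1
  apply Finset.filter_congr
  intro k hk
  rw [Finset.mem_range] at hk
  rw [show chainLead (Qn fun i : Fin n => q ↑i) k = chainLead q k from cLF_bridge q n k hk]

lemma LH_bridge (q : ℕ → E) (n : ℕ) (hn : 1 ≤ n) :
    LH n (fun i : Fin n => q i) = q (chainLead q (n-1)) := by
  unfold LH
  rw [cLF_bridge q n (n-1) (by omega)]
  simp only [Qn]
  rw [dif_pos (by have := chainLead_le q (n-1); omega : chainLead q (n-1) < n)]

/-! Measurability -/

lemma measurable_Qn_coord (n : ℕ) (m : ℕ) : Measurable (fun x : Fin n → E => Qn x m) := by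
  unfold Qn
  by_cases h : m < n
  · simp only [dif_pos h]
    exact measurable_pi_apply _
  · simp only [dif_neg h]
    exact measurable_const

lemma measurableSet_prec_Qn (n : ℕ) (j m : ℕ) :
    MeasurableSet {x : Fin n → E | prec (Qn x j) (Qn x m)} := by
  have : {x : Fin n → E | prec (Qn x j) (Qn x m)}
      = ⋂ i : Fin 2, {x | Qn x j i < Qn x m i} := by
    ext x; simp [prec, Set.mem_iInter]
  rw [this]
  exact MeasurableSet.iInter fun i =>
    measurableSet_lt ((measurable_pi_apply i).comp (measurable_Qn_coord n j))
      ((measurable_pi_apply i).comp (measurable_Qn_coord n m))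

lemma measurable_cLF (n : ℕ) (k : ℕ) : Measurable (fun x : Fin n → E => cLF n x k) := by
  induction k with
  | zero =>
    have : (fun x : Fin n → E => cLF n x 0) = fun _ => 0 := by
      funext x; simp [cLF, chainLead]
    rw [this]; exact measurable_const
  | succ k ih =>
    have heq : (fun x : Fin n → E => cLF n x (k+1))
        = fun x => if prec (Qn x (cLF n x k)) (Qn x (k+1)) then k+1 else cLF n x k := by
      funext x; rfl
    rw [heq]
    apply Measurable.ite _ measurable_const ih
    have hset : {x : Fin n → E | prec (Qn x (cLF n x k)) (Qn x (k+1))}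
        = ⋃ m : ℕ, ({x | cLF n x k = m} ∩ {x | prec (Qn x m) (Qn x (k+1))}) := by
      ext x
      simp only [Set.mem_setOf_eq, Set.mem_iUnion, Set.mem_inter_iff]
      constructor
      · intro h; exact ⟨cLF n x k, rfl, h⟩
      · rintro ⟨m, hm, h⟩; rw [hm]; exact h
    rw [hset]
    exact MeasurableSet.iUnion fun m =>
      (ih (measurableSet_singleton m)).inter (measurableSet_prec_Qn n m (k+1))

lemma measurableSet_cLF_eq (n k m : ℕ) : MeasurableSet {x : Fin n → E | cLF n x k = m} :=
  measurable_cLF n k (measurableSet_singleton m)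

lemma measurable_YH (n : ℕ) : Measurable (fun x : Fin n → E => YH n x) := by
  have heq : (fun x : Fin n → E => YH n x)
      = fun x => ∑ k ∈ Finset.range n, if cLF n x k = k then 1 else 0 := by
    funext x
    unfold YH chainCount cLF
    rw [Finset.card_filter]
  rw [heq]
  exact Finset.measurable_sum _ fun k _ =>
    Measurable.ite (measurableSet_cLF_eq n k k) measurable_const measurable_const

lemma measurable_LH (n : ℕ) : Measurable (fun x : Fin n → E => LH n x) := by
  apply measurable_pi_lambda
  intro i
  have heq : (fun x : Fin n → E => LH n x i)
      = fun x => ∑ m ∈ Finset.range n, if cLF n x (n-1) = m then Qn x m i else 0 := by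
    funext x
    rw [Finset.sum_ite_eq (Finset.range n) (cLF n x (n-1)) (fun m => Qn x m i)]
    by_cases hn : 1 ≤ n
    · rw [if_pos]
      · rfl
      · rw [Finset.mem_range]
        have := chainLead_le (Qn x) (n-1)
        simp only [cLF]
        omega
    · interval_cases n
      rw [if_neg (by rw [Finset.range_zero]; exact Finset.notMem_empty _)]
      show Qn x (cLF 0 x (0-1)) i = 0
      simp only [Qn]
      rw [dif_neg (by omega)]
      rfl
  rw [heq]
  exact Finset.measurable_sum _ fun m _ =>
    Measurable.ite (measurableSet_cLF_eq n (n-1) m)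
      ((measurable_pi_apply i).comp (measurable_Qn_coord n m)) measurable_const

lemma continuous_av : Continuous av := by
  unfold av clamp
  exact continuous_finset_prod _ fun i _ =>
    (continuous_const.min ((continuous_const.max (continuous_const.sub (continuous_apply i)))))

lemma measurable_av : Measurable av := continuous_av.measurable

/-! Integration layer -/

lemma volume_cube : volume (cube 2) = 1 := by
  rw [cube, volume_pi_pi]
  simp [Real.volume_Icc]

lemma measurableSet_cube : MeasurableSet (cube 2) :=
  MeasurableSet.univ_pi fun _ => measurableSet_Icc

lemma unif_cube_eq : unif (cube 2) = volume.restrict (cube 2) := by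
  rw [unif, volume_cube]
  simp

instance : IsProbabilityMeasure (unif (cube 2)) := by
  rw [unif_cube_eq]
  constructor
  rw [Measure.restrict_apply_univ, volume_cube]

lemma measurableSet_prec (L : E) : MeasurableSet {z : E | prec L z} := by
  have : {z : E | prec L z} = ⋂ i : Fin 2, {z : E | L i < z i} := by
    ext z; simp [prec, Set.mem_iInter]
  rw [this]
  exact MeasurableSet.iInter fun i =>
    measurableSet_lt measurable_const (measurable_pi_apply i)

lemma oneDim (a : ℝ) (ha : a ∈ Set.Icc (0:ℝ) 1) (r : ℕ) :
    ∫ t : ℝ, Set.indicator (Set.Ioc a 1) (fun t => (1-t)^r) t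
      = (1-a)^(r+1) / ((r:ℝ)+1) := by
  rw [integral_indicator measurableSet_Ioc]
  rw [← intervalIntegral.integral_of_le ha.2]
  rw [intervalIntegral.integral_comp_sub_left (fun x => x^r) 1]
  rw [integral_pow]
  rw [sub_self, zero_pow (by omega : r + 1 ≠ 0)]
  ring

lemma oneDim' (r : ℕ) :
    ∫ t : ℝ, Set.indicator (Set.Icc (0:ℝ) 1) (fun t => (1-t)^r) t = 1 / ((r:ℝ)+1) := by
  rw [integral_indicator measurableSet_Icc, integral_Icc_eq_integral_Ioc,
    ← integral_indicator measurableSet_Ioc,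
    oneDim 0 (by norm_num) r]
  norm_num

lemma prod_fin_two (g : Fin 2 → ℝ) : ∏ i, g i = g 0 * g 1 := by
  simp [Fin.prod_univ_two]

lemma innerInt (L : E) (hL : L ∈ cube 2) (r : ℕ) :
    ∫ z, (if prec L z then (av z)^r else 0) ∂(unif (cube 2))
      = (av L)^(r+1) / ((r:ℝ)+1)^2 := by
  have hL' : ∀ i, L i ∈ Set.Icc (0:ℝ) 1 := fun i => hL i (Set.mem_univ i)
  rw [unif_cube_eq]
  rw [← integral_indicator measurableSet_cube]
  have hpoint : ∀ z : E, Set.indicator (cube 2) (fun z => if prec L z then (av z)^r else 0) z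
      = ∏ i, Set.indicator (Set.Ioc (L i) 1) (fun t => (1-t)^r) (z i) := by
    intro z
    by_cases hz : z ∈ cube 2
    · by_cases hp : prec L z
      · rw [Set.indicator_of_mem hz, if_pos hp]
        have hmem : ∀ i : Fin 2, z i ∈ Set.Ioc (L i) 1 :=
          fun i => ⟨hp i, (hz i (Set.mem_univ i)).2⟩
        rw [av_of_cube hz, ← Finset.prod_pow]
        exact Finset.prod_congr rfl fun i _ => (Set.indicator_of_mem (hmem i) (fun t => (1-t)^r)).symm
      · rw [Set.indicator_of_mem hz, if_neg hp]
        obtain ⟨i, hi⟩ : ∃ i, ¬ L i < z i := by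
          by_contra h
          push_neg at h
          exact hp h
        refine (Finset.prod_eq_zero (Finset.mem_univ i) ?_).symm
        rw [Set.indicator_of_notMem]
        intro hmem
        exact hi hmem.1
    · rw [Set.indicator_of_notMem hz]
      obtain ⟨i, hi⟩ : ∃ i, z i ∉ Set.Icc (0:ℝ) 1 := by
        by_contra h
        push_neg at h
        exact hz fun i _ => h i
      refine (Finset.prod_eq_zero (Finset.mem_univ i) ?_).symm
      rw [Set.indicator_of_notMem]
      intro hmem
      exact hi ⟨le_trans (hL' i).1 (le_of_lt hmem.1), hmem.2⟩
  rw [show (Set.indicator (cube 2) fun z => if prec L z then (av z)^r else 0)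
      = fun z => ∏ i, Set.indicator (Set.Ioc (L i) 1) (fun t => (1-t)^r) (z i)
    from funext hpoint]
  rw [MeasureTheory.volume_pi]
  rw [MeasureTheory.integral_fintype_prod_eq_prod
    (f := fun i t => Set.indicator (Set.Ioc (L i) 1) (fun t => (1-t)^r) t)]
  rw [Finset.prod_congr rfl fun i _ => oneDim (L i) (hL' i) r]
  rw [av_of_cube hL]
  rw [prod_fin_two, prod_fin_two (g := fun i => 1 - L i), mul_pow,
    div_mul_div_comm, ← pow_two]

lemma baseInt (r : ℕ) :
    ∫ z, (av z)^r ∂(unif (cube 2)) = 1 / ((r:ℝ)+1)^2 := by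
  rw [unif_cube_eq]
  rw [← integral_indicator measurableSet_cube]
  have hpoint : ∀ z : E, Set.indicator (cube 2) (fun z => (av z)^r) z
      = ∏ i, Set.indicator (Set.Icc (0:ℝ) 1) (fun t => (1-t)^r) (z i) := by
    intro z
    by_cases hz : z ∈ cube 2
    · rw [Set.indicator_of_mem hz]
      rw [av_of_cube hz, ← Finset.prod_pow]
      exact Finset.prod_congr rfl fun i _ =>
        (Set.indicator_of_mem (hz i (Set.mem_univ i)) (fun t => (1-t)^r)).symm
    · rw [Set.indicator_of_notMem hz]
      obtain ⟨i, hi⟩ : ∃ i, z i ∉ Set.Icc (0:ℝ) 1 := by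
        by_contra h
        push_neg at h
        exact hz fun i _ => h i
      exact (Finset.prod_eq_zero (Finset.mem_univ i) (Set.indicator_of_notMem hi _)).symm
  rw [show (Set.indicator (cube 2) fun z => (av z)^r)
      = fun z => ∏ i, Set.indicator (Set.Icc (0:ℝ) 1) (fun t => (1-t)^r) (z i)
    from funext hpoint]
  rw [MeasureTheory.volume_pi]
  rw [MeasureTheory.integral_fintype_prod_eq_prod
    (f := fun _ t => Set.indicator (Set.Icc (0:ℝ) 1) (fun t => (1-t)^r) t)]
  rw [Finset.prod_congr rfl fun i _ => oneDim' r]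
  rw [prod_fin_two]
  have : ((r:ℝ)+1) ≠ 0 := by positivity
  field_simp


lemma integrable_bdd {α : Type*} [MeasurableSpace α] (ν : Measure α) [IsFiniteMeasure ν]
    (f : α → ℝ) (hm : AEStronglyMeasurable f ν) (C : ℝ) (hb : ∀ a, |f a| ≤ C) :
    Integrable f ν :=
  Integrable.mono' (integrable_const C) hm (ae_of_all _ fun a => by
    simpa [Real.norm_eq_abs] using hb a)

lemma measurable_ite_av (L : E) (r : ℕ) (C : ℝ) :
    Measurable (fun z : E => if prec L z then (av z)^r else C) :=
  Measurable.ite (measurableSet_prec L) (measurable_av.pow_const r) measurable_const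

lemma abs_ite_av_le (L : E) (r : ℕ) (C : ℝ) (z : E) :
    |if prec L z then (av z)^r else C| ≤ 1 + |C| := by
  split
  · have h := av_mem z
    rw [abs_of_nonneg (pow_nonneg h.1 r)]
    calc (av z)^r ≤ 1 := pow_le_one₀ h.1 h.2
    _ ≤ 1 + |C| := le_add_of_nonneg_right (abs_nonneg C)
  · exact le_add_of_nonneg_left zero_le_one |>.trans_eq rfl |>.trans (le_refl _) |>.trans (le_refl _)

lemma innerInt' (L : E) (hL : L ∈ cube 2) (r : ℕ) (C : ℝ) :
    ∫ z, (if prec L z then (av z)^r else C) ∂(unif (cube 2))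
      = (av L)^(r+1) / ((r:ℝ)+1)^2 + C * (1 - av L) := by
  set μ := unif (cube 2)
  have hpt : (fun z : E => if prec L z then (av z)^r else C)
      = fun z => ((if prec L z then (av z)^r else 0) + C)
        - C * (if prec L z then (av z)^0 else 0) := by
    funext z
    by_cases h : prec L z
    · simp [h]
    · simp [h]
  have hint1 : Integrable (fun z : E => if prec L z then (av z)^r else 0) μ :=
    integrable_bdd μ _ (measurable_ite_av L r 0).aestronglyMeasurable 2
      (fun z => (abs_ite_av_le L r 0 z).trans (by norm_num))
  have hint0 : Integrable (fun z : E => if prec L z then (av z)^0 else 0) μ :=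
    integrable_bdd μ _ (measurable_ite_av L 0 0).aestronglyMeasurable 2
      (fun z => (abs_ite_av_le L 0 0 z).trans (by norm_num))
  rw [hpt, integral_sub (f := fun z : E => (if prec L z then (av z)^r else 0) + C)
      (g := fun z : E => C * (if prec L z then (av z)^0 else 0))
      (hint1.add (integrable_const C)) (hint0.const_mul C),
    integral_add hint1 (integrable_const C), integral_const_mul,
    innerInt L hL r, innerInt L hL 0]
  simp only [measure_univ, ENNReal.toReal_one, smul_eq_mul, one_mul, integral_const]
  norm_num
  ring


lemma condStep {Ω : Type*} [MeasurableSpace Ω] (P : Measure Ω) [IsProbabilityMeasure P]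
    {n : ℕ} (X : Ω → (Fin n → E)) (Z : Ω → E) (hX : Measurable X) (hZ : Measurable Z)
    (hInd : IndepFun X Z P) (hZd : P.map Z = unif (cube 2))
    (f : (Fin n → E) → E → ℝ) (hf : Measurable (Function.uncurry f)) (C : ℝ)
    (hb : ∀ x z, |f x z| ≤ C) :
    ∫ ω, f (X ω) (Z ω) ∂P = ∫ ω, (∫ z, f (X ω) z ∂(unif (cube 2))) ∂P := by
  set μ := unif (cube 2) with hμdef
  have hPX : IsProbabilityMeasure (P.map X) := Measure.isProbabilityMeasure_map hX.aemeasurable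
  have hmap : P.map (fun ω => (X ω, Z ω)) = (P.map X).prod (P.map Z) :=
    (indepFun_iff_map_prod_eq_prod_map_map hX.aemeasurable hZ.aemeasurable).1 hInd
  have hint : Integrable (Function.uncurry f) ((P.map X).prod μ) :=
    integrable_bdd _ _ hf.aestronglyMeasurable C (fun y => hb y.1 y.2)
  have hg : StronglyMeasurable (fun x => ∫ z, f x z ∂μ) :=
    hf.stronglyMeasurable.integral_prod_right'
  calc ∫ ω, f (X ω) (Z ω) ∂P
      = ∫ y, Function.uncurry f y ∂(P.map (fun ω => (X ω, Z ω))) := by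
        rw [integral_map (hX.prodMk hZ).aemeasurable hf.aestronglyMeasurable]
        rfl
    _ = ∫ y, Function.uncurry f y ∂((P.map X).prod μ) := by rw [hmap, hZd]
    _ = ∫ x, (∫ z, f x z ∂μ) ∂(P.map X) := integral_prod _ hint
    _ = ∫ ω, (∫ z, f (X ω) z ∂μ) ∂P := by
        rw [integral_map hX.aemeasurable hg.aestronglyMeasurable]


lemma chainLead_zero (q : ℕ → E) : chainLead q 0 = 0 := rfl

lemma step_Y (q : ℕ → E) (m : ℕ) :
    chainCount q (m+2) = chainCount q (m+1)
      + (if prec (q (chainLead q m)) (q (m+1)) then 1 else 0) := by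
  rw [chainCount_succ]
  congr 1
  exact if_congr (chainLead_succ_iff q m) rfl rfl

lemma step_L (q : ℕ → E) (m : ℕ) :
    q (chainLead q (m+1))
      = if prec (q (chainLead q m)) (q (m+1)) then q (m+1) else q (chainLead q m) := by
  rw [chainLead]
  exact apply_ite q _ _ _

lemma YH_le (n : ℕ) (x : Fin n → E) : YH n x ≤ n :=
  (Finset.card_filter_le _ _).trans_eq (Finset.card_range n)

lemma LH_mem_cube {n : ℕ} {x : Fin n → E} (hn : 1 ≤ n) (hx : ∀ i, x i ∈ cube 2) :
    LH n x ∈ cube 2 := by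
  unfold LH Qn
  rw [dif_pos (by have := chainLead_le (Qn x) (n-1); simp only [cLF]; omega
    : cLF n x (n-1) < n)]
  exact hx _

lemma measurableSet_prec_pair : MeasurableSet {y : E × E | prec y.1 y.2} := by
  have : {y : E × E | prec y.1 y.2} = ⋂ i : Fin 2, {y : E × E | y.1 i < y.2 i} := by
    ext y; simp [prec, Set.mem_iInter]
  rw [this]
  exact MeasurableSet.iInter fun i =>
    measurableSet_lt (measurable_fst.eval) (measurable_snd.eval)


section Master

variable {Ω : Type*} [MeasurableSpace Ω] (P : Measure Ω) [IsProbabilityMeasure P]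
    (p : ℕ → Ω → E)

lemma master (hmeas : ∀ n, Measurable (p n))
    (hdist : ∀ n, P.map (p n) = unif (cube 2))
    (hindep : iIndepFun p P) (m s r : ℕ) :
    ∫ ω, ((YH (m+2) (fun i : Fin (m+2) => p i ω) : ℝ))^s
        * (av (LH (m+2) (fun i : Fin (m+2) => p i ω)))^r ∂P
      = ∫ ω, ((YH (m+1) (fun i : Fin (m+1) => p i ω) : ℝ) + 1)^s
            * (cc r * (av (LH (m+1) (fun i : Fin (m+1) => p i ω)))^(r+1))
          + ((YH (m+1) (fun i : Fin (m+1) => p i ω) : ℝ))^s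
            * (av (LH (m+1) (fun i : Fin (m+1) => p i ω)))^r
          - ((YH (m+1) (fun i : Fin (m+1) => p i ω) : ℝ))^s
            * (av (LH (m+1) (fun i : Fin (m+1) => p i ω)))^(r+1) ∂P := by
  set μ := unif (cube 2) with hμdef
  set X : Ω → Fin (m+1) → E := fun ω i => p i ω with hX
  have hXm : Measurable X := measurable_pi_lambda _ fun i => hmeas i
  have hInd : IndepFun X (p (m+1)) P := by
    have h := hindep.indepFun_finset (Finset.range (m+1)) {m+1}
      (by simp only [Finset.disjoint_left, Finset.mem_range, Finset.mem_singleton]; omega) hmeas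
    have hφ : Measurable (fun g : ((Finset.range (m+1) : Finset ℕ) → E) =>
        (fun i : Fin (m+1) => g ⟨(i : ℕ), Finset.mem_range.2 i.isLt⟩)) :=
      measurable_pi_lambda _ fun i => measurable_pi_apply _
    have hψ : Measurable (fun g : (({m+1} : Finset ℕ) → E)
        => g ⟨m+1, Finset.mem_singleton_self (m+1)⟩) := measurable_pi_apply _
    exact h.comp hφ hψ
  set f : (Fin (m+1) → E) → E → ℝ := fun x z =>
    ((YH (m+1) x : ℝ) + (if prec (LH (m+1) x) z then 1 else 0))^s
      * (if prec (LH (m+1) x) z then (av z)^r else (av (LH (m+1) x))^r) with hfd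
  have hprecset : MeasurableSet {y : (Fin (m+1) → E) × E | prec (LH (m+1) y.1) y.2} := by
    have : {y : (Fin (m+1) → E) × E | prec (LH (m+1) y.1) y.2}
        = (fun y : (Fin (m+1) → E) × E => (LH (m+1) y.1, y.2)) ⁻¹' {y : E × E | prec y.1 y.2} :=
      rfl
    rw [this]
    exact measurableSet_prec_pair.preimage
      (((measurable_LH (m+1)).comp measurable_fst).prodMk measurable_snd)
  have hfm : Measurable (Function.uncurry f) := by
    apply Measurable.mul
    · apply Measurable.pow_const
      exact (measurable_from_top.comp ((measurable_YH (m+1)).comp measurable_fst)).add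
        (Measurable.ite hprecset measurable_const measurable_const)
    · exact Measurable.ite hprecset ((measurable_av.comp measurable_snd).pow_const r)
        (((measurable_av.comp ((measurable_LH (m+1)).comp measurable_fst))).pow_const r)
  have hkey : ∀ (a b : ℝ), 0 ≤ a → a ≤ (m:ℝ)+2 → b ∈ Set.Icc (0:ℝ) 1 →
      |a^s * b^r| ≤ ((m:ℝ)+2)^s := by
    intro a b ha ha2 hb
    rw [abs_mul, abs_pow, abs_pow, abs_of_nonneg ha, abs_of_nonneg hb.1]
    calc a^s * b^r ≤ ((m:ℝ)+2)^s * 1 := by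
          apply mul_le_mul (pow_le_pow_left₀ ha ha2 s) (pow_le_one₀ hb.1 hb.2)
            (pow_nonneg hb.1 r) (by positivity)
    _ = ((m:ℝ)+2)^s := by ring
  have hbound : ∀ x z, |f x z| ≤ ((m:ℝ)+2)^s := by
    intro x z
    have hY0 : (0:ℝ) ≤ (YH (m+1) x : ℝ) := Nat.cast_nonneg _
    have hYn : (YH (m+1) x : ℝ) ≤ (m:ℝ)+1 := by
      have := YH_le (m+1) x
      push_cast
      exact_mod_cast this
    rw [hfd]
    by_cases h : prec (LH (m+1) x) z
    · simp only [if_pos h]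
      exact hkey _ _ (by positivity) (by linarith) (av_mem z)
    · simp only [if_neg h]
      rw [add_zero]
      exact hkey _ _ hY0 (by linarith) (av_mem _)
  have step1 : ∀ ω, ((YH (m+2) (fun i : Fin (m+2) => p i ω) : ℝ))^s
      * (av (LH (m+2) (fun i : Fin (m+2) => p i ω)))^r = f (X ω) (p (m+1) ω) := by
    intro ω
    have hYb : YH (m+2) (fun i : Fin (m+2) => p i ω) = chainCount (fun i => p i ω) (m+2) :=
      YH_bridge (fun i => p i ω) (m+2)
    have hYb' : YH (m+1) (X ω) = chainCount (fun i => p i ω) (m+1) :=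
      YH_bridge (fun i => p i ω) (m+1)
    have hLb : LH (m+2) (fun i : Fin (m+2) => p i ω)
        = (fun i => p i ω) (chainLead (fun i => p i ω) (m+1)) := by
      have := LH_bridge (fun i => p i ω) (m+2) (by omega)
      simpa using this
    have hLb' : LH (m+1) (X ω) = (fun i => p i ω) (chainLead (fun i => p i ω) m) := by
      have := LH_bridge (fun i => p i ω) (m+1) (by omega)
      simpa using this
    rw [hfd]
    simp only [hYb, hYb', hLb, hLb']
    rw [step_Y (fun i => p i ω) m, step_L (fun i => p i ω) m]
    rw [apply_ite av, apply_ite (fun t : ℝ => t^r)]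
    by_cases h : prec ((fun i => p i ω) (chainLead (fun i => p i ω) m)) (p (m+1) ω)
    · simp only [if_pos h]
      push_cast
      ring
    · simp only [if_neg h]
      push_cast
      ring
  have inner_eq : ∀ x : Fin (m+1) → E, LH (m+1) x ∈ cube 2 →
      ∫ z, f x z ∂μ = ((YH (m+1) x : ℝ)+1)^s * (cc r * (av (LH (m+1) x))^(r+1))
        + (YH (m+1) x : ℝ)^s * (av (LH (m+1) x))^r
        - (YH (m+1) x : ℝ)^s * (av (LH (m+1) x))^(r+1) := by
    intro x hL
    have hpt : (fun z => f x z) = fun z =>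
        ((YH (m+1) x : ℝ)+1)^s * (if prec (LH (m+1) x) z then (av z)^r else 0)
        + ((YH (m+1) x : ℝ)^s * (av (LH (m+1) x))^r
          - (YH (m+1) x : ℝ)^s * (av (LH (m+1) x))^r
              * (if prec (LH (m+1) x) z then (av z)^0 else 0)) := by
      funext z
      rw [hfd]
      by_cases h : prec (LH (m+1) x) z
      · simp only [if_pos h, pow_zero]
        ring
      · simp only [if_neg h]
        ring
    have hint1 : Integrable (fun z : E => if prec (LH (m+1) x) z then (av z)^r else 0) μ :=
      integrable_bdd μ _ (measurable_ite_av _ r 0).aestronglyMeasurable 2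
        (fun z => (abs_ite_av_le _ r 0 z).trans (by norm_num))
    have hint0 : Integrable (fun z : E => if prec (LH (m+1) x) z then (av z)^0 else 0) μ :=
      integrable_bdd μ _ (measurable_ite_av _ 0 0).aestronglyMeasurable 2
        (fun z => (abs_ite_av_le _ 0 0 z).trans (by norm_num))
    rw [hpt]
    rw [integral_add
      (f := fun z : E => ((YH (m+1) x : ℝ)+1)^s * (if prec (LH (m+1) x) z then (av z)^r else 0))
      (g := fun z : E => (YH (m+1) x : ℝ)^s * (av (LH (m+1) x))^r
          - (YH (m+1) x : ℝ)^s * (av (LH (m+1) x))^r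
            * (if prec (LH (m+1) x) z then (av z)^0 else 0))
      (hint1.const_mul _) ((integrable_const _).sub (hint0.const_mul _))]
    rw [integral_const_mul,
      integral_sub (f := fun _ : E => (YH (m+1) x : ℝ)^s * (av (LH (m+1) x))^r)
        (g := fun z : E => (YH (m+1) x : ℝ)^s * (av (LH (m+1) x))^r
            * (if prec (LH (m+1) x) z then (av z)^0 else 0))
        (integrable_const _) (hint0.const_mul _),
      integral_const, integral_const_mul, innerInt _ hL r, innerInt _ hL 0]
    simp only [measure_univ, ENNReal.toReal_one, smul_eq_mul, one_mul, probReal_univ]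
    rw [cc]
    push_cast
    ring
  have hae : ∀ᵐ ω ∂P, LH (m+1) (X ω) ∈ cube 2 := by
    have hcube : ∀ i : ℕ, ∀ᵐ ω ∂P, p i ω ∈ cube 2 := by
      intro i
      have h1 : P (p i ⁻¹' cube 2) = 1 := by
        rw [← Measure.map_apply (hmeas i) measurableSet_cube, hdist i, hμdef, unif_cube_eq,
          Measure.restrict_apply_self, volume_cube]
      rw [ae_iff]
      have h2 : {ω | ¬ p i ω ∈ cube 2} = (p i ⁻¹' cube 2)ᶜ := rfl
      rw [h2, measure_compl ((hmeas i) measurableSet_cube) (measure_ne_top _ _), h1,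
        measure_univ, tsub_self]
    have hall : ∀ᵐ ω ∂P, ∀ i : Fin (m+1), p i ω ∈ cube 2 := by
      rw [ae_all_iff]
      intro i
      exact hcube i
    filter_upwards [hall] with ω hω
    exact LH_mem_cube (by omega) hω
  calc ∫ ω, ((YH (m+2) (fun i : Fin (m+2) => p i ω) : ℝ))^s
        * (av (LH (m+2) (fun i : Fin (m+2) => p i ω)))^r ∂P
      = ∫ ω, f (X ω) (p (m+1) ω) ∂P := integral_congr_ae (ae_of_all _ step1)
    _ = ∫ ω, (∫ z, f (X ω) z ∂μ) ∂P :=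
        condStep P X (p (m+1)) hXm (hmeas (m+1)) hInd (hdist (m+1)) f hfm _ hbound
    _ = _ := by
        apply integral_congr_ae
        filter_upwards [hae] with ω hω
        exact inner_eq (X ω) hω


lemma integrable_hist (hmeas : ∀ n, Measurable (p n)) (n : ℕ) (c : ℝ) (s r : ℕ) :
    Integrable (fun ω => ((YH n (fun i : Fin n => p i ω) : ℝ) + c)^s
      * (av (LH n (fun i : Fin n => p i ω)))^r) P := by
  have hXm : Measurable (fun ω => (fun i : Fin n => p i ω)) :=
    measurable_pi_lambda _ fun i => hmeas i
  apply integrable_bdd P _ ?_ (((n:ℝ)+|c|)^s)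
  · intro ω
    set x := fun i : Fin n => p i ω
    have hY0 : (0:ℝ) ≤ (YH n x : ℝ) := Nat.cast_nonneg _
    have hYn : (YH n x : ℝ) ≤ (n:ℝ) := by exact_mod_cast YH_le n x
    have hA := av_mem (LH n x)
    rw [abs_mul, abs_pow, abs_pow, abs_of_nonneg hA.1]
    calc |(YH n x : ℝ) + c|^s * (av (LH n x))^r ≤ ((n:ℝ)+|c|)^s * 1 := by
          apply mul_le_mul _ (pow_le_one₀ hA.1 hA.2) (pow_nonneg hA.1 r) (by positivity)
          apply pow_le_pow_left₀ (abs_nonneg _)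
          calc |(YH n x : ℝ) + c| ≤ |(YH n x : ℝ)| + |c| := abs_add_le _ _
          _ ≤ (n:ℝ) + |c| := by rw [abs_of_nonneg hY0]; linarith
    _ = ((n:ℝ)+|c|)^s := by ring
  · apply Measurable.aestronglyMeasurable
    exact ((((measurable_from_top.comp (measurable_YH n)).add measurable_const).pow_const s).mul
      ((measurable_av.comp (measurable_LH n)).pow_const r)).comp hXm

lemma main_ind (hmeas : ∀ n, Measurable (p n))
    (hdist : ∀ n, P.map (p n) = unif (cube 2))
    (hindep : iIndepFun p P) :
    ∀ n : ℕ, 1 ≤ n →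
      (∀ r : ℕ,
        (∫ ω, (av (LH n (fun i : Fin n => p i ω)))^r ∂P = MM r n)
        ∧ ∫ ω, (YH n (fun i : Fin n => p i ω) : ℝ)
            * (av (LH n (fun i : Fin n => p i ω)))^r ∂P = VV r n)
      ∧ ∫ ω, ((YH n (fun i : Fin n => p i ω) : ℝ))^2 ∂P = y2 n := by
  intro n hn
  induction n, hn using Nat.le_induction with
  | base =>
    have hY1 : ∀ ω, YH 1 (fun i : Fin 1 => p i ω) = 1 := fun ω => by
      rw [YH_bridge (fun i => p i ω) 1, chainCount_one]
    have hL1 : ∀ ω, LH 1 (fun i : Fin 1 => p i ω) = p 0 ω := fun ω => by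
      rw [LH_bridge (fun i => p i ω) 1 le_rfl]
      rfl
    have hA : ∀ r : ℕ, ∫ ω, (av (LH 1 (fun i : Fin 1 => p i ω)))^r ∂P = MM r 1 := by
      intro r
      have : (fun ω => (av (LH 1 (fun i : Fin 1 => p i ω)))^r)
          = fun ω => (av (p 0 ω))^r := by
        funext ω; rw [hL1 ω]
      rw [this]
      rw [← integral_map (hmeas 0).aemeasurable
        ((measurable_av.pow_const r)).aestronglyMeasurable]
      rw [hdist 0, baseInt r, MM_one]
      rfl
    refine ⟨fun r => ⟨hA r, ?_⟩, ?_⟩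
    · have : (fun ω => (YH 1 (fun i : Fin 1 => p i ω) : ℝ)
          * (av (LH 1 (fun i : Fin 1 => p i ω)))^r)
          = fun ω => (av (LH 1 (fun i : Fin 1 => p i ω)))^r := by
        funext ω; rw [hY1 ω]; norm_num
      rw [this, hA r, MM_one, VV_one]
    · have : (fun ω => ((YH 1 (fun i : Fin 1 => p i ω) : ℝ))^2) = fun _ => (1:ℝ) := by
        funext ω; rw [hY1 ω]; norm_num
      rw [this, integral_const, y2_one]
      simp
  | succ n hn IH =>
    obtain ⟨m, rfl⟩ : ∃ m, n = m + 1 := ⟨n - 1, by omega⟩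
    obtain ⟨IH12, IHy2⟩ := IH
    have IH1 : ∀ r, ∫ ω, (av (LH (m+1) (fun i : Fin (m+1) => p i ω)))^r ∂P = MM r (m+1) :=
      fun r => (IH12 r).1
    have IH2 : ∀ r, ∫ ω, (YH (m+1) (fun i : Fin (m+1) => p i ω) : ℝ)
        * (av (LH (m+1) (fun i : Fin (m+1) => p i ω)))^r ∂P = VV r (m+1) :=
      fun r => (IH12 r).2
    -- integrability abbreviations
    have Iav : ∀ r : ℕ, Integrable
        (fun ω => (av (LH (m+1) (fun i : Fin (m+1) => p i ω)))^r) P := by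
      intro r
      have := integrable_hist P p hmeas (m+1) 0 0 r
      simpa using this
    have IYav : ∀ r : ℕ, Integrable
        (fun ω => (YH (m+1) (fun i : Fin (m+1) => p i ω) : ℝ)
          * (av (LH (m+1) (fun i : Fin (m+1) => p i ω)))^r) P := by
      intro r
      have := integrable_hist P p hmeas (m+1) 0 1 r
      simpa using this
    have IY2av : ∀ r : ℕ, Integrable
        (fun ω => ((YH (m+1) (fun i : Fin (m+1) => p i ω) : ℝ))^2
          * (av (LH (m+1) (fun i : Fin (m+1) => p i ω)))^r) P := by
      intro r
      have := integrable_hist P p hmeas (m+1) 0 2 r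
      simpa using this
    refine ⟨fun r => ⟨?_, ?_⟩, ?_⟩
    · -- moments of A
      have hm0 := master P p hmeas hdist hindep m 0 r
      simp only [pow_zero, one_mul] at hm0
      rw [hm0]
      have ha : Integrable (fun ω => cc r * (av (LH (m+1) (fun i : Fin (m+1) => p i ω)))^(r+1)) P := (Iav (r+1)).const_mul (cc r)
      have hb : Integrable (fun ω => cc r * (av (LH (m+1) (fun i : Fin (m+1) => p i ω)))^(r+1) + (av (LH (m+1) (fun i : Fin (m+1) => p i ω)))^r) P := ha.add (Iav r)
      rw [integral_sub hb (Iav (r+1)), integral_add ha (Iav r), integral_const_mul,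
        IH1 (r+1), IH1 r, MM_rec r (m+1)]
      ring
    · -- mixed moments
      have hm1 := master P p hmeas hdist hindep m 1 r
      simp only [pow_one] at hm1
      rw [hm1]
      have hpt : (fun ω => ((YH (m+1) (fun i : Fin (m+1) => p i ω) : ℝ) + 1)
            * (cc r * (av (LH (m+1) (fun i : Fin (m+1) => p i ω)))^(r+1))
          + (YH (m+1) (fun i : Fin (m+1) => p i ω) : ℝ)
            * (av (LH (m+1) (fun i : Fin (m+1) => p i ω)))^r
          - (YH (m+1) (fun i : Fin (m+1) => p i ω) : ℝ)
            * (av (LH (m+1) (fun i : Fin (m+1) => p i ω)))^(r+1))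
          = fun ω => (cc r * ((YH (m+1) (fun i : Fin (m+1) => p i ω) : ℝ)
              * (av (LH (m+1) (fun i : Fin (m+1) => p i ω)))^(r+1))
            + cc r * (av (LH (m+1) (fun i : Fin (m+1) => p i ω)))^(r+1))
            + ((YH (m+1) (fun i : Fin (m+1) => p i ω) : ℝ)
              * (av (LH (m+1) (fun i : Fin (m+1) => p i ω)))^r
            - (YH (m+1) (fun i : Fin (m+1) => p i ω) : ℝ)
              * (av (LH (m+1) (fun i : Fin (m+1) => p i ω)))^(r+1)) := by
        funext ω
        ring
      rw [hpt]
      have ha : Integrable (fun ω => cc r * ((YH (m+1) (fun i : Fin (m+1) => p i ω) : ℝ) * (av (LH (m+1) (fun i : Fin (m+1) => p i ω)))^(r+1))) P := (IYav (r+1)).const_mul (cc r)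
      have hb : Integrable (fun ω => cc r * (av (LH (m+1) (fun i : Fin (m+1) => p i ω)))^(r+1)) P := (Iav (r+1)).const_mul (cc r)
      have hab : Integrable (fun ω => cc r * ((YH (m+1) (fun i : Fin (m+1) => p i ω) : ℝ) * (av (LH (m+1) (fun i : Fin (m+1) => p i ω)))^(r+1)) + cc r * (av (LH (m+1) (fun i : Fin (m+1) => p i ω)))^(r+1)) P := ha.add hb
      have hcd : Integrable (fun ω => (YH (m+1) (fun i : Fin (m+1) => p i ω) : ℝ) * (av (LH (m+1) (fun i : Fin (m+1) => p i ω)))^r - (YH (m+1) (fun i : Fin (m+1) => p i ω) : ℝ) * (av (LH (m+1) (fun i : Fin (m+1) => p i ω)))^(r+1)) P := (IYav r).sub (IYav (r+1))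
      rw [integral_add hab hcd, integral_add ha hb, integral_sub (IYav r) (IYav (r+1)),
        integral_const_mul, integral_const_mul, IH1 (r+1), IH2 (r+1), IH2 r, VV_rec r (m+1)]
      ring
    · -- second moment of Y
      have hm2 := master P p hmeas hdist hindep m 2 0
      simp only [pow_zero, mul_one] at hm2
      rw [hm2]
      have hpt : (fun ω => ((YH (m+1) (fun i : Fin (m+1) => p i ω) : ℝ) + 1)^2
            * (cc 0 * (av (LH (m+1) (fun i : Fin (m+1) => p i ω)))^(0+1))
          + ((YH (m+1) (fun i : Fin (m+1) => p i ω) : ℝ))^2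
          - ((YH (m+1) (fun i : Fin (m+1) => p i ω) : ℝ))^2
            * (av (LH (m+1) (fun i : Fin (m+1) => p i ω)))^(0+1))
          = fun ω => ((YH (m+1) (fun i : Fin (m+1) => p i ω) : ℝ))^2
            + (2 * ((YH (m+1) (fun i : Fin (m+1) => p i ω) : ℝ)
              * (av (LH (m+1) (fun i : Fin (m+1) => p i ω)))^1)
            + (av (LH (m+1) (fun i : Fin (m+1) => p i ω)))^1) := by
        funext ω
        have hcc : cc 0 = 1 := by norm_num [cc]
        rw [hcc]
        ring
      rw [hpt]
      have IY2 : Integrable (fun ω => ((YH (m+1) (fun i : Fin (m+1) => p i ω) : ℝ))^2) P := by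
        have := IY2av 0
        simpa using this
      have ha : Integrable (fun ω => 2 * ((YH (m+1) (fun i : Fin (m+1) => p i ω) : ℝ) * (av (LH (m+1) (fun i : Fin (m+1) => p i ω)))^1)) P := (IYav 1).const_mul 2
      have hab : Integrable (fun ω => 2 * ((YH (m+1) (fun i : Fin (m+1) => p i ω) : ℝ) * (av (LH (m+1) (fun i : Fin (m+1) => p i ω)))^1) + (av (LH (m+1) (fun i : Fin (m+1) => p i ω)))^1) P := ha.add (Iav 1)
      rw [integral_add IY2 hab, integral_add ha (Iav 1), integral_const_mul,
        IHy2, IH1 1, IH2 1, y2_rec (m+1)]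
      ring

end Master


lemma genH'_eq_genH : genH' = genH := rfl

lemma VV_zero (n : ℕ) : VV 0 n = (genH' 1 n + 1)/2 := by
  unfold VV MM
  rw [← HH_eq]
  have h1 : HH 1 = 1 := by norm_num [HH]
  rw [h1]
  simp [Nat.choose_zero_right]
  ring

end ChainAux

/-- For iud samples from the unit square `[0,1]²`, the number of chain
records has mean `(H_n + 1)/2` and variance `(H_n + H_n^{(2)} - 2)/4`. -/
theorem chain_records_mean_variance_square
    {Ω : Type*} [MeasurableSpace Ω] (P : Measure Ω) [IsProbabilityMeasure P]
    (p : ℕ → Ω → (Fin 2 → ℝ))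
    (hmeas : ∀ n, Measurable (p n))
    (hdist : ∀ n, P.map (p n) = unif (cube 2))
    (hindep : iIndepFun p P) :
    ∀ n : ℕ, 1 ≤ n →
      (∫ ω, (chainCount (fun i => p i ω) n : ℝ) ∂P) = (genH 1 n + 1) / 2 ∧
        variance (fun ω => (chainCount (fun i => p i ω) n : ℝ)) P =
          (genH 1 n + genH 2 n - 2) / 4 := by
  intro n hn
  obtain ⟨h12, hy2⟩ := ChainAux.main_ind P p hmeas hdist hindep n hn
  have hbridge : ∀ ω, (chainCount (fun i => p i ω) n : ℝ)
      = (ChainAux.YH n (fun i : Fin n => p i ω) : ℝ) := by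
    intro ω
    rw [ChainAux.YH_bridge (fun i => p i ω) n]
  have hfun : (fun ω => (chainCount (fun i => p i ω) n : ℝ))
      = fun ω => (ChainAux.YH n (fun i : Fin n => p i ω) : ℝ) := funext hbridge
  have hVV0 : ChainAux.VV 0 n = (genH 1 n + 1)/2 := by
    rw [ChainAux.VV_zero, ChainAux.genH'_eq_genH]
  have hmean : ∫ ω, (chainCount (fun i => p i ω) n : ℝ) ∂P = (genH 1 n + 1) / 2 := by
    have h0 := (h12 0).2
    simp only [pow_zero, mul_one] at h0
    rw [hfun, h0, hVV0]
  refine ⟨hmean, ?_⟩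
  have hXmeas : Measurable (fun ω => (chainCount (fun i => p i ω) n : ℝ)) := by
    rw [hfun]
    exact measurable_from_top.comp ((ChainAux.measurable_YH n).comp
      (measurable_pi_lambda _ fun i => hmeas i))
  have hmem : MeasureTheory.MemLp (fun ω => (chainCount (fun i => p i ω) n : ℝ)) 2 P := by
    apply MeasureTheory.MemLp.of_bound hXmeas.aestronglyMeasurable (n : ℝ)
    filter_upwards with ω
    rw [Real.norm_eq_abs, hbridge ω, abs_of_nonneg (Nat.cast_nonneg _)]
    exact_mod_cast ChainAux.YH_le n _
  rw [ProbabilityTheory.variance_eq_sub hmem]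
  have h2 : (∫ ω, ((fun ω => (chainCount (fun i => p i ω) n : ℝ))^2) ω ∂P)
      = ChainAux.y2 n := by
    have hsq : ((fun ω => (chainCount (fun i => p i ω) n : ℝ))^2)
        = fun ω => ((ChainAux.YH n (fun i : Fin n => p i ω) : ℝ))^2 := by
      funext ω
      simp [Pi.pow_apply, hbridge ω]
    rw [hsq]
    exact hy2
  have hEX : (∫ ω, (fun ω => (chainCount (fun i => p i ω) n : ℝ)) ω ∂P)
      = (genH 1 n + 1) / 2 := hmean
  rw [show P[(fun ω => (chainCount (fun i => p i ω) n : ℝ))^2]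
      = ChainAux.y2 n from h2,
    show P[fun ω => (chainCount (fun i => p i ω) n : ℝ)] = (genH 1 n + 1)/2 from hEX]
  rw [ChainAux.y2, ChainAux.genH'_eq_genH]
  ring
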